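/- For integers n ≥ 1 and 1 ≤ k ≤ n: -∑_{j=k}^n (n - 2j) · C(n+j, n) · C(2n-j, n) · C(n,j)² = k · ∑_{l=0}^{n-k} (-1)^l · C(n+k, k+l) · C(n-l-1, k-1) · (2n-k-l)!/(k!·(n-k)!·(n-k-l)!). -/

import Mathlib

open Nat Finset

noncomputable def Bq (n k l : ℕ) : ℚ :=
  (k : ℚ) * (n.choose k : ℚ) * (-1)^l * ((n+k).choose (k+l) : ℚ) *
    ((n-l-1).choose (k-1) : ℚ) * ((2*n-k-l).choose n : ℚ)

noncomputable def Gq (n k l : ℕ) : ℚ :=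
  ((n:ℚ) - l) * ((n:ℚ) - 2*k - l) / (k:ℚ)^2 * Bq n k l

noncomputable def fq (n j : ℕ) : ℚ :=
  ((n : ℚ) - 2 * j) * ((n + j).choose n : ℚ) * ((2 * n - j).choose n : ℚ) *
    ((n.choose j : ℚ)) ^ 2

set_option maxHeartbeats 1000000 in
lemma keystep (K L A : ℕ) :
    Gq (K+L+A+2) (K+1) (L+1) - Gq (K+L+A+2) (K+1) L
      = Bq (K+L+A+2) (K+1) L - Bq (K+L+A+2) (K+2) L := by
  unfold Gq Bq
  rw [show K+L+A+2-(L+1)-1 = K+A from by omega,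
      show K+L+A+2-L-1 = K+A+1 from by omega,
      show 2*(K+L+A+2)-(K+1)-(L+1) = K+L+2*A+2 from by omega,
      show 2*(K+L+A+2)-(K+1)-L = K+L+2*A+3 from by omega,
      show 2*(K+L+A+2)-(K+2)-L = K+L+2*A+2 from by omega,
      show K+1-1 = K from by omega, show K+2-1 = K+1 from by omega,
      show K+L+A+2+(K+1) = 2*K+L+A+3 from by omega,
      show K+L+A+2+(K+2) = 2*K+L+A+4 from by omega,
      show K+1+(L+1) = K+L+2 from by omega,
      show K+1+L = K+L+1 from by omega,
      show K+2+L = K+L+2 from by omega]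
  -- ratio identities
  have R1 : ((2*K+L+A+3).choose (K+L+2) : ℚ) * (K+L+2) = ((2*K+L+A+3).choose (K+L+1) : ℚ) * (K+A+2) := by
    have := Nat.choose_succ_right_eq (2*K+L+A+3) (K+L+1)
    rw [show K+L+1+1 = K+L+2 from rfl, show 2*K+L+A+3-(K+L+1) = K+A+2 from by omega] at this
    exact_mod_cast congrArg (Nat.cast (R := ℚ)) this
  have R2 : ((K+A).choose K : ℚ) * (K+A+1) = ((K+A+1).choose K : ℚ) * (A+1) := by
    have := Nat.choose_mul_succ_eq (K+A) K
    rw [show K+A+1-K = A+1 from by omega] at this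
    exact_mod_cast congrArg (Nat.cast (R := ℚ)) this
  have R3 : ((K+L+2*A+2).choose (K+L+A+2) : ℚ) * (K+L+2*A+3) = ((K+L+2*A+3).choose (K+L+A+2) : ℚ) * (A+1) := by
    have := Nat.choose_mul_succ_eq (K+L+2*A+2) (K+L+A+2)
    rw [show K+L+2*A+2+1 = K+L+2*A+3 from rfl,
        show K+L+2*A+3-(K+L+A+2) = A+1 from by omega] at this
    exact_mod_cast congrArg (Nat.cast (R := ℚ)) this
  have R4 : ((K+L+A+2).choose (K+2) : ℚ) * (K+2) = ((K+L+A+2).choose (K+1) : ℚ) * (L+A+1) := by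
    have := Nat.choose_succ_right_eq (K+L+A+2) (K+1)
    rw [show K+1+1 = K+2 from rfl, show K+L+A+2-(K+1) = L+A+1 from by omega] at this
    exact_mod_cast congrArg (Nat.cast (R := ℚ)) this
  have R5 : ((2*K+L+A+4).choose (K+L+2) : ℚ) * (K+A+2) * (K+L+2)
      = ((2*K+L+A+3).choose (K+L+1) : ℚ) * (K+A+2) * (2*K+L+A+4) := by
    have := Nat.choose_mul_succ_eq (2*K+L+A+3) (K+L+2)
    rw [show 2*K+L+A+3+1 = 2*K+L+A+4 from rfl,
        show 2*K+L+A+4-(K+L+2) = K+A+2 from by omega] at this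
    have h2 := congrArg (Nat.cast (R := ℚ)) this
    push_cast at h2
    calc ((2*K+L+A+4).choose (K+L+2) : ℚ) * (K+A+2) * (K+L+2)
        = ((2*K+L+A+3).choose (K+L+2) : ℚ) * (2*K+L+A+4) * (K+L+2) := by
          linear_combination (-(K:ℚ)-L-2) * h2
      _ = (((2*K+L+A+3).choose (K+L+2) : ℚ) * (K+L+2)) * (2*K+L+A+4) := by ring
      _ = ((2*K+L+A+3).choose (K+L+1) : ℚ) * (K+A+2) * (2*K+L+A+4) := by rw [R1]
  have R6 : ((K+A+1).choose (K+1) : ℚ) * (K+1) = ((K+A+1).choose K : ℚ) * (A+1) := by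
    have := Nat.choose_succ_right_eq (K+A+1) K
    rw [show K+A+1-K = A+1 from by omega] at this
    exact_mod_cast congrArg (Nat.cast (R := ℚ)) this
  -- solve ratios for the shifted chooses
  have n1 : ((K:ℚ)+L+2) ≠ 0 := by positivity
  have n2 : ((K:ℚ)+A+1) ≠ 0 := by positivity
  have n3 : ((K:ℚ)+L+2*A+3) ≠ 0 := by positivity
  have n4 : ((K:ℚ)+2) ≠ 0 := by positivity
  have n5 : ((K:ℚ)+A+2) ≠ 0 := by positivity
  have n6 : ((K:ℚ)+1) ≠ 0 := by positivity
  have E1 : ((2*K+L+A+3).choose (K+L+2) : ℚ) = ((2*K+L+A+3).choose (K+L+1) : ℚ) * (K+A+2) / (K+L+2) := by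
    field_simp; linarith [R1]
  have E2 : ((K+A).choose K : ℚ) = ((K+A+1).choose K : ℚ) * (A+1) / (K+A+1) := by
    field_simp; linarith [R2]
  have E3 : ((K+L+2*A+2).choose (K+L+A+2) : ℚ) = ((K+L+2*A+3).choose (K+L+A+2) : ℚ) * (A+1) / (K+L+2*A+3) := by
    field_simp; linarith [R3]
  have E4 : ((K+L+A+2).choose (K+2) : ℚ) = ((K+L+A+2).choose (K+1) : ℚ) * (L+A+1) / (K+2) := by
    field_simp; linarith [R4]
  have E5 : ((2*K+L+A+4).choose (K+L+2) : ℚ) = ((2*K+L+A+3).choose (K+L+1) : ℚ) * (2*K+L+A+4) / (K+L+2) := by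
    have := R5
    field_simp at this ⊢
    nlinarith [this]
  have E6 : ((K+A+1).choose (K+1) : ℚ) = ((K+A+1).choose K : ℚ) * (A+1) / (K+1) := by
    field_simp; linarith [R6]
  rw [E1, E2, E3, E4, E6]
  rw [E5]
  push_cast
  field_simp
  ring

lemma bq_top (n k : ℕ) (hk : 1 ≤ k) (hkn : k < n) : Bq n (k+1) (n-k) = 0 := by
  unfold Bq
  rw [show n-(n-k)-1 = k-1 from by omega, show k+1-1 = k from by omega]
  rw [Nat.choose_eq_zero_of_lt (show k-1 < k by omega)]
  ring

lemma gq_top (n k : ℕ) (hk : 1 ≤ k) (hkn : k ≤ n) : Gq n k (n-k+1) = 0 := by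
  unfold Gq Bq
  rw [show 2*n-k-(n-k+1) = n-1 from by omega]
  rw [Nat.choose_eq_zero_of_lt (show n-1 < n by omega)]
  ring

lemma gq_last (n k : ℕ) (hk : 1 ≤ k) (hkn : k ≤ n) : Gq n k (n-k) = - Bq n k (n-k) := by
  unfold Gq
  have h1 : ((n-k : ℕ) : ℚ) = (n:ℚ) - k := by
    push_cast [Nat.cast_sub hkn]; ring
  rw [h1]
  have hk0 : (k:ℚ) ≠ 0 := Nat.cast_ne_zero.mpr (by omega)
  field_simp
  ring

lemma gq_zero (n k : ℕ) (hk : 1 ≤ k) (hkn : k ≤ n) : Gq n k 0 = fq n k := by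
  unfold Gq Bq fq
  have hn0 : (n:ℚ) ≠ 0 := Nat.cast_ne_zero.mpr (by omega)
  have hk0 : (k:ℚ) ≠ 0 := Nat.cast_ne_zero.mpr (by omega)
  have key : (n : ℚ) * ((n-1).choose (k-1) : ℚ) = (k : ℚ) * (n.choose k : ℚ) := by
    have := Nat.add_one_mul_choose_eq (n-1) (k-1)
    rw [show (n-1)+1 = n from by omega, show (k-1)+1 = k from by omega] at this
    have := congrArg (Nat.cast (R := ℚ)) this
    push_cast at this
    linarith [this]
  have hrep : ((n-1).choose (k-1) : ℚ) = (k:ℚ) * (n.choose k : ℚ) / n := by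
    field_simp
    linarith [key]
  have hsymm : ((n+k).choose (k+0) : ℚ) = ((n+k).choose n : ℚ) := by
    rw [Nat.add_zero, ← Nat.choose_symm (show k ≤ n+k by omega),
        show n+k-k = n from by omega]
  rw [show n - 0 - 1 = n - 1 from by omega, show 2*n-k-0 = 2*n-k from rfl,
      hrep, hsymm]
  field_simp
  ring

lemma sum_step (n k : ℕ) (hk : 1 ≤ k) (hkn : k < n) :
    ∑ l ∈ Finset.range (n-k+1), Bq n k l
      = ∑ l ∈ Finset.range (n-(k+1)+1), Bq n (k+1) l - fq n k := by
  have tele : ∑ l ∈ Finset.range (n-k+1), (Gq n k (l+1) - Gq n k l)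
      = Gq n k (n-k+1) - Gq n k 0 := Finset.sum_range_sub _ _
  have step : ∀ l ∈ Finset.range (n-k+1),
      Gq n k (l+1) - Gq n k l = Bq n k l - Bq n (k+1) l := by
    intro l hl
    rw [Finset.mem_range] at hl
    by_cases hl2 : l = n - k
    · subst hl2
      rw [gq_top n k hk (le_of_lt hkn), gq_last n k hk (le_of_lt hkn),
          bq_top n k hk hkn]
      ring
    · obtain ⟨K, rfl⟩ : ∃ K, k = K+1 := ⟨k-1, by omega⟩
      obtain ⟨A, hA⟩ : ∃ A, n = K+l+A+2 := ⟨n-(K+1)-l-1, by omega⟩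
      subst hA
      exact keystep K l A
  rw [Finset.sum_congr rfl step] at tele
  rw [Finset.sum_sub_distrib] at tele
  rw [gq_top n k hk (le_of_lt hkn), gq_zero n k hk (le_of_lt hkn)] at tele
  have hlast : ∑ l ∈ Finset.range (n-k+1), Bq n (k+1) l
      = ∑ l ∈ Finset.range (n-(k+1)+1), Bq n (k+1) l := by
    rw [show n-k+1 = (n-(k+1)+1)+1 from by omega, Finset.sum_range_succ,
        show n-(k+1)+1 = n-k from by omega, bq_top n k hk hkn, add_zero]
  rw [hlast] at tele
  linarith [tele]

lemma base_case (n : ℕ) (hn : 1 ≤ n) :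
    -∑ j ∈ Finset.Icc n n, fq n j = ∑ l ∈ Finset.range (n-n+1), Bq n n l := by
  rw [Finset.Icc_self, Finset.sum_singleton, show n-n+1 = 1 from by omega,
      Finset.sum_range_one]
  unfold fq Bq
  rw [show 2*n-n = n from by omega]
  simp only [Nat.sub_zero, Nat.add_zero, Nat.choose_self]
  push_cast
  ring

lemma main_ind (n : ℕ) : ∀ d k, 1 ≤ k → k + d = n →
    -∑ j ∈ Finset.Icc k n, fq n j = ∑ l ∈ Finset.range (n-k+1), Bq n k l := by
  intro d
  induction d with
  | zero =>
    intro k hk hkeq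
    have : k = n := by omega
    subst this
    exact base_case k hk
  | succ d ih =>
    intro k hk hkeq
    have hkn : k < n := by omega
    have ih' := ih (k+1) (by omega) (by omega)
    rw [show Finset.Icc k n = insert k (Finset.Icc (k+1) n) from by
          ext x; simp [Finset.mem_Icc, Finset.mem_insert]; omega]
    rw [Finset.sum_insert (by simp)]
    rw [sum_step n k hk hkn, ← ih']
    ring

lemma termA (n k l : ℕ) (hk : 1 ≤ k) (hkn : k ≤ n) (hl : l ≤ n - k) :
    (k : ℚ) * ((-1 : ℚ) ^ l * ((n + k).choose (k + l) : ℚ) * ((n - l - 1).choose (k - 1) : ℚ) *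
      (((2 * n - k - l).factorial : ℚ) /
        ((k.factorial : ℚ) * ((n - k).factorial : ℚ) * ((n - k - l).factorial : ℚ))))
    = Bq n k l := by
  unfold Bq
  have h1 : (2*n-k-l).choose n * n ! * (n-k-l)! = (2*n-k-l)! := by
    have := Nat.choose_mul_factorial_mul_factorial (show n ≤ 2*n-k-l by omega)
    rwa [show 2*n-k-l-n = n-k-l from by omega] at this
  have h2 : n.choose k * k ! * (n-k)! = n ! := Nat.choose_mul_factorial_mul_factorial hkn
  have h1' := congrArg (Nat.cast (R := ℚ)) h1
  have h2' := congrArg (Nat.cast (R := ℚ)) h2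
  push_cast at h1' h2'
  have f1 : ((k !:ℕ):ℚ) ≠ 0 := Nat.cast_ne_zero.mpr (Nat.factorial_ne_zero _)
  have f2 : (((n-k)!:ℕ):ℚ) ≠ 0 := Nat.cast_ne_zero.mpr (Nat.factorial_ne_zero _)
  have f3 : (((n-k-l)!:ℕ):ℚ) ≠ 0 := Nat.cast_ne_zero.mpr (Nat.factorial_ne_zero _)
  rw [← h1', ← h2']
  field_simp

/-- `-∑_{j=k}^n (n-2j) C(n+j,n) C(2n-j,n) C(n,j)²
  = k ∑_{l=0}^{n-k} (-1)^l C(n+k,k+l) C(n-l-1,k-1) (2n-k-l)!/(k!(n-k)!(n-k-l)!)`. -/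
theorem stmt7 (n k : ℕ) (hk : 1 ≤ k) (hkn : k ≤ n) :
    -∑ j ∈ Finset.Icc k n,
        ((n : ℚ) - 2 * j) * ((n + j).choose n : ℚ) * ((2 * n - j).choose n : ℚ) *
          ((n.choose j : ℚ)) ^ 2
      = k * ∑ l ∈ Finset.range (n - k + 1),
          (-1 : ℚ) ^ l * ((n + k).choose (k + l) : ℚ) * ((n - l - 1).choose (k - 1) : ℚ) *
            (((2 * n - k - l).factorial : ℚ) /
              ((k.factorial : ℚ) * ((n - k).factorial : ℚ) * ((n - k - l).factorial : ℚ))) := by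
  rw [Finset.mul_sum]
  rw [Finset.sum_congr rfl (fun l hl => termA n k l hk hkn
        (by rw [Finset.mem_range] at hl; omega))]
  exact main_ind n (n-k) k hk (by omega)
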